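/- Suppose T satisfies the Functional Correlation Bound with rate n^{−γ} for η-Hölder observables, for some γ > 0. Then there exists a constant C > 0, depending only on the constant in the Functional Correlation Bound, with the following property. Let k ≥ 1 and let ℓ_0 ≤ u_0 < ℓ_1 ≤ u_1 < ⋯ < ℓ_{k−1} ≤ u_{k−1} be nonnegative integers (so the blocks {ℓ_i,…,u_i} are disjoint and ℓ_{i+1} > u_i). For 0 ≤ i < k let Φ_i : M^{u_i−ℓ_i+1} → ℝ be bounded separately η-Hölder, define the random variable X_i on (M,μ) by X_i(x) = Φ_i(T^{ℓ_i}x,…,T^{u_i}x), and let X̂_0,…,X̂_{k−1} be independent random variables on some probability space with X̂_i equal in distribution to X_i. Set R = max_i ‖Φ_i‖_∞. Then for every Lipschitz function F : [−R,R]^k → ℝ (with respect to the ℓ¹ norm on ℝ^k), |E_μ[F(X_0,…,X_{k−1})] − E[F(X̂_0,…,X̂_{k−1})]| ≤ C Σ_{r=0}^{k−2} (ℓ_{r+1} − u_r)^{−γ} (‖F‖_∞ + Lip(F) Σ_{i=0}^{k−1} Σ_{j=0}^{u_i−ℓ_i} [Φ_i]_{η,j}). -/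

import Mathlib

open MeasureTheory Function

/-- `T` satisfies the Functional Correlation Bound with rate `n ^ (-γ)` for `η`-Hölder
observables: there is a constant `C₀ > 0` such that for all `0 ≤ p < q`, all monotone sequences
of times `n_0 ≤ ⋯ ≤ n_{q-1}`, and every bounded separately `η`-Hölder `G : M^q → ℝ`
(with bound `Ginf` on `|G|` and separate Hölder constants `Gh i`), the correlation between
`G(T^{n_0}x, …, T^{n_{q-1}}x)` and the decoupled version (where the first `p` coordinates use
`x₀` and the remaining ones `x₁`) is at most
`C₀ (n_p - n_{p-1})^{-γ} (Ginf + ∑ i, Gh i)`. -/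
def FunctionalCorrelationBound {M : Type*} [MetricSpace M] [MeasurableSpace M]
    (μ : Measure M) (T : M → M) (η γ : ℝ) : Prop :=
  ∃ C₀ : ℝ, 0 < C₀ ∧
    ∀ (q p : ℕ), p < q →
    ∀ n : ℕ → ℕ, Monotone n → n (p - 1) < n p →
    ∀ G : (Fin q → M) → ℝ, Measurable G →
    ∀ Ginf : ℝ, 0 ≤ Ginf → (∀ x, |G x| ≤ Ginf) →
    ∀ Gh : Fin q → ℝ, (∀ i, 0 ≤ Gh i) →
    (∀ (i : Fin q) (x : Fin q → M) (y : M),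
        |G x - G (Function.update x i y)| ≤ Gh i * dist (x i) y ^ η) →
    |(∫ x, G (fun i => T^[n i] x) ∂μ) -
        ∫ x₀, ∫ x₁, G (fun i => if (i : ℕ) < p then T^[n i] x₀ else T^[n i] x₁) ∂μ ∂μ|
      ≤ C₀ * ((n p : ℝ) - (n (p - 1) : ℝ)) ^ (-γ) * (Ginf + ∑ i, Gh i)


open ProbabilityTheory

section Helpers

lemma my_iIndep_ae_eq {Ω ι : Type*} [MeasurableSpace Ω] {P : Measure Ω}
    {f g : ι → Ω → ℝ} (h : iIndepFun f P)
    (he : ∀ i, f i =ᵐ[P] g i) :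
    iIndepFun g P := by
  rw [iIndepFun_iff_measure_inter_preimage_eq_mul] at h ⊢
  intro S sets hsets
  have key : ∀ᵐ ω ∂P, ∀ i ∈ S, f i ω = g i ω :=
    (ae_ball_iff S.countable_toSet).2 fun i _ => he i
  have h1 : (⋂ i ∈ S, f i ⁻¹' sets i : Set Ω) =ᵐ[P] (⋂ i ∈ S, g i ⁻¹' sets i) := by
    rw [Filter.eventuallyEq_set]
    filter_upwards [key] with ω hω
    simp only [Set.mem_iInter, Set.mem_preimage]
    exact ⟨fun H i hi => (hω i hi) ▸ H i hi, fun H i hi => (hω i hi).symm ▸ H i hi⟩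
  rw [← measure_congr h1, h S hsets]
  refine Finset.prod_congr rfl fun i _ => measure_congr ?_
  rw [Filter.eventuallyEq_set]
  filter_upwards [he i] with ω hω
  simp only [Set.mem_preimage, hω]

lemma my_iIndep_precomp {Ω : Type*} [MeasurableSpace Ω] {P : Measure Ω} {k : ℕ}
    {f : ℕ → Ω → ℝ}
    (h : iIndepFun (fun i : Fin (k+1) => f i) P) :
    iIndepFun (fun i : Fin k => f i) P := by
  classical
  rw [iIndepFun_iff_measure_inter_preimage_eq_mul] at h ⊢
  intro S sets hsets
  set sets' : Fin (k+1) → Set ℝ :=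
    fun i => if h : (i : ℕ) < k then sets ⟨i, h⟩ else Set.univ with hsets'
  have hcast : ∀ j : Fin k, sets' (Fin.castSucc j) = sets j := by
    intro j
    have hj : ((Fin.castSucc j : Fin (k+1)) : ℕ) < k := by simp [j.isLt]
    rw [hsets']
    simp only [hj, dif_pos]
    congr 1
  have hmeas : ∀ i ∈ S.image Fin.castSucc, MeasurableSet (sets' i) := by
    intro i hi
    obtain ⟨j, hj, rfl⟩ := Finset.mem_image.1 hi
    rw [hcast j]; exact hsets j hj
  have := h (S.image Fin.castSucc) hmeas
  have hint : (⋂ i ∈ S.image Fin.castSucc, (fun ω => f i ω) ⁻¹' sets' i)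
      = ⋂ j ∈ S, (fun ω => f j ω) ⁻¹' sets j := by
    rw [Finset.set_biInter_finset_image]
    refine Set.iInter₂_congr fun j hj => ?_
    rw [hcast j]; simp
  have hprod : (∏ i ∈ S.image Fin.castSucc, P ((fun ω => f i ω) ⁻¹' sets' i))
      = ∏ j ∈ S, P ((fun ω => f j ω) ⁻¹' sets j) := by
    rw [Finset.prod_image (fun a _ b _ hab => Fin.castSucc_injective _ hab)]
    refine Finset.prod_congr rfl fun j _ => ?_
    rw [hcast j]; simp
  rw [hint, hprod] at this
  exact this

lemma my_indep_fubini {Ω α β : Type*} [MeasurableSpace Ω] [MeasurableSpace α]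
    [MeasurableSpace β] {P : Measure Ω} [IsProbabilityMeasure P]
    {V : Ω → α} {W : Ω → β} (hV : Measurable V) (hW : Measurable W)
    (h : IndepFun V W P) (g : α → β → ℝ)
    (hg : Measurable fun p : α × β => g p.1 p.2) (C : ℝ)
    (hgb : ∀ a b, |g a b| ≤ C) :
    ∫ ω, g (V ω) (W ω) ∂P = ∫ ω, ∫ ω', g (V ω) (W ω') ∂P ∂P := by
  have hmap : P.map (fun ω => (V ω, W ω)) = (P.map V).prod (P.map W) :=
    (indepFun_iff_map_prod_eq_prod_map_map hV.aemeasurable hW.aemeasurable).mp h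
  haveI : IsProbabilityMeasure (P.map V) := Measure.isProbabilityMeasure_map hV.aemeasurable
  haveI : IsProbabilityMeasure (P.map W) := Measure.isProbabilityMeasure_map hW.aemeasurable
  have h1 : ∫ ω, g (V ω) (W ω) ∂P
      = ∫ p, g p.1 p.2 ∂(P.map (fun ω => (V ω, W ω))) := by
    rw [integral_map (hV.aemeasurable.prodMk hW.aemeasurable) hg.aestronglyMeasurable]
  have hint : Integrable (fun p : α × β => g p.1 p.2) ((P.map V).prod (P.map W)) := by
    refine Integrable.mono' (integrable_const C) hg.aestronglyMeasurable ?_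
    exact Filter.Eventually.of_forall fun p => by
      simpa [Real.norm_eq_abs] using hgb p.1 p.2
  have h2 : ∫ p, g p.1 p.2 ∂((P.map V).prod (P.map W))
      = ∫ a, ∫ b, g a b ∂(P.map W) ∂(P.map V) := integral_prod _ hint
  rw [h1, hmap, h2]
  have h3 : ∀ a, ∫ b, g a b ∂(P.map W) = ∫ ω', g a (W ω') ∂P := by
    intro a
    exact integral_map hW.aemeasurable
      ((hg.comp (measurable_const.prodMk measurable_id)).aestronglyMeasurable)
  simp_rw [h3]
  refine integral_map hV.aemeasurable ?_
  have hsm : StronglyMeasurable fun a => ∫ b, g a b ∂(P.map W) :=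
    hg.stronglyMeasurable.integral_prod_right
  have heq : (fun a => ∫ ω', g a (W ω') ∂P) = fun a => ∫ b, g a b ∂(P.map W) := by
    funext a; rw [h3 a]
  rw [heq]
  exact hsm.aestronglyMeasurable

lemma my_lipschitz_continuous {k : ℕ} {F : (Fin k → ℝ) → ℝ} {FLip : ℝ} (hFLip : 0 ≤ FLip)
    (hFl : ∀ y y' : Fin k → ℝ, |F y - F y'| ≤ FLip * ∑ i, |y i - y' i|) :
    Continuous F := by
  have : LipschitzWith (⟨FLip * k, by positivity⟩ : NNReal) F := by
    apply LipschitzWith.of_dist_le_mul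
    intro y y'
    rw [Real.dist_eq]
    refine (hFl y y').trans ?_
    have h2 : ∑ i, |y i - y' i| ≤ ∑ _i : Fin k, dist y y' := by
      refine Finset.sum_le_sum fun i _ => ?_
      rw [← Real.dist_eq]
      exact dist_le_pi_dist y y' i
    simp only [Finset.sum_const, Finset.card_univ, Fintype.card_fin, nsmul_eq_mul] at h2
    calc FLip * ∑ i, |y i - y' i| ≤ FLip * (k * dist y y') :=
          mul_le_mul_of_nonneg_left h2 hFLip
      _ = FLip * k * dist y y' := by ring
  exact this.continuous

end Helpers

namespace MyBlocks

variable (s : ℕ → ℕ)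

def c (i : ℕ) : ℕ := ∑ l ∈ Finset.range i, s l

lemma c_succ (i : ℕ) : c s (i+1) = c s i + s i := Finset.sum_range_succ s i

lemma c_mono : Monotone (c s) := fun _ _ hab =>
  Finset.sum_le_sum_of_subset (Finset.range_subset_range.2 hab)

variable (k : ℕ)

def blk (m : ℕ) : ℕ := Nat.findGreatest (fun i => c s i ≤ m) k

lemma blk_le (m : ℕ) : blk s k m ≤ k := Nat.findGreatest_le k

lemma blk_spec (m : ℕ) : c s (blk s k m) ≤ m := by
  rcases Nat.eq_zero_or_pos (blk s k m) with h | h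
  · rw [h]; simp [c]
  · exact Nat.findGreatest_spec (P := fun i => c s i ≤ m) (Nat.zero_le k) (by simp [c])

lemma blk_lt {m : ℕ} (hm : m < c s (k+1)) : m < c s (blk s k m + 1) := by
  rcases eq_or_lt_of_le (blk_le s k m) with h | h
  · rw [h]; exact hm
  · by_contra hcon
    push_neg at hcon
    exact Nat.findGreatest_is_greatest (P := fun i => c s i ≤ m) (n := k)
      (Nat.lt_succ_self _) h hcon

lemma blk_pack {i j : ℕ} (hi : i ≤ k) (hj : j < s i) :
    blk s k (c s i + j) = i := by
  have h1 : i ≤ blk s k (c s i + j) :=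
    Nat.le_findGreatest hi (Nat.le_add_right _ _)
  rcases eq_or_lt_of_le h1 with h | h
  · exact h.symm
  · exfalso
    have h2 : c s (i+1) ≤ c s (blk s k (c s i + j)) := c_mono s h
    have h3 := blk_spec s k (c s i + j)
    rw [c_succ] at h2
    omega

lemma pack_lt {i j : ℕ} (hi : i ≤ k) (hj : j < s i) :
    c s i + j < c s (k+1) := by
  have h : c s i + j < c s (i+1) := by rw [c_succ]; omega
  exact h.trans_le (c_mono s (by omega))

lemma sum_range_add' (a b : ℕ) (f : ℕ → ℝ) :
    ∑ m ∈ Finset.range (a+b), f m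
      = ∑ m ∈ Finset.range a, f m + ∑ j ∈ Finset.range b, f (a+j) := by
  induction b with
  | zero => simp
  | succ b ih => rw [← Nat.add_assoc, Finset.sum_range_succ, Finset.sum_range_succ, ih]; ring

lemma sum_blocks (f : ℕ → ℝ) (K : ℕ) :
    ∑ m ∈ Finset.range (c s K), f m
      = ∑ i ∈ Finset.range K, ∑ j ∈ Finset.range (s i), f (c s i + j) := by
  induction K with
  | zero => simp [c]
  | succ K ih => rw [c_succ, Finset.sum_range_succ, ← ih, sum_range_add']

end MyBlocks

section Main

variable {M : Type*} [MetricSpace M] [MeasurableSpace M] [BorelSpace M]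

/-- append a last coordinate -/
def appFn (k : ℕ) (a : Fin k → ℝ) (b : ℝ) : Fin (k+1) → ℝ :=
  fun i => if h : (i : ℕ) < k then a ⟨i, h⟩ else b

lemma appFn_measurable (k : ℕ) :
    Measurable fun p : (Fin k → ℝ) × ℝ => appFn k p.1 p.2 := by
  refine measurable_pi_lambda _ fun i => ?_
  by_cases h : (i : ℕ) < k
  · simp only [appFn, h, dif_pos]
    exact (measurable_pi_apply _).comp measurable_fst
  · simp only [appFn, h, dif_neg, not_false_iff]
    exact measurable_snd

lemma appFn_castSucc (k : ℕ) (a : Fin k → ℝ) (b : ℝ) (i : Fin k) :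
    appFn k a b (Fin.castSucc i) = a i := by
  have h : ((Fin.castSucc i : Fin (k+1)) : ℕ) < k := by simp [i.isLt]
  simp only [appFn, h, dif_pos]
  congr 1

lemma appFn_last (k : ℕ) (a : Fin k → ℝ) (b : ℝ) : appFn k a b (Fin.last k) = b := by
  simp [appFn]

/-- Step S1: the Functional Correlation Bound applied to decouple the last block. -/
lemma fcb_step (μ : Measure M) [IsProbabilityMeasure μ] (T : M → M) (hTm : Measurable T)
    (η γ : ℝ) (C₀ : ℝ)
    (hFCB : ∀ (q p : ℕ), p < q → ∀ n : ℕ → ℕ, Monotone n → n (p - 1) < n p →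
      ∀ G : (Fin q → M) → ℝ, Measurable G →
      ∀ Ginf : ℝ, 0 ≤ Ginf → (∀ x, |G x| ≤ Ginf) →
      ∀ Gh : Fin q → ℝ, (∀ i, 0 ≤ Gh i) →
      (∀ (i : Fin q) (x : Fin q → M) (y : M),
        |G x - G (Function.update x i y)| ≤ Gh i * dist (x i) y ^ η) →
      |(∫ x, G (fun i => T^[n i] x) ∂μ) -
        ∫ x₀, ∫ x₁, G (fun i => if (i : ℕ) < p then T^[n i] x₀ else T^[n i] x₁) ∂μ ∂μ|
        ≤ C₀ * ((n p : ℝ) - (n (p - 1) : ℝ)) ^ (-γ) * (Ginf + ∑ i, Gh i))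
    (k : ℕ) (hk : 1 ≤ k)
    (ℓ u : ℕ → ℕ) (hℓu : ∀ i, i < k + 1 → ℓ i ≤ u i)
    (hu : ∀ i, i + 1 < k + 1 → u i < ℓ (i + 1))
    (Φ : (i : ℕ) → (Fin (u i - ℓ i + 1) → M) → ℝ) (hΦ : ∀ i, Measurable (Φ i))
    (Φh : (i : ℕ) → Fin (u i - ℓ i + 1) → ℝ) (hΦh0 : ∀ i j, 0 ≤ Φh i j)
    (hΦhol : ∀ (i : ℕ) (j : Fin (u i - ℓ i + 1)) (z : Fin (u i - ℓ i + 1) → M) (y : M),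
      |Φ i z - Φ i (Function.update z j y)| ≤ Φh i j * dist (z j) y ^ η)
    (F : (Fin (k+1) → ℝ) → ℝ) (Fsup FLip : ℝ) (hFsup : 0 ≤ Fsup) (hFLip : 0 ≤ FLip)
    (hFb : ∀ y, |F y| ≤ Fsup)
    (hFl : ∀ y y', |F y - F y'| ≤ FLip * ∑ i, |y i - y' i|) :
    |(∫ x, F (fun i : Fin (k+1) => Φ i (fun j => T^[ℓ i + (j : ℕ)] x)) ∂μ) -
       ∫ x₀, ∫ x₁, F (fun i : Fin (k+1) => if (i : ℕ) < k
           then Φ i (fun j => T^[ℓ i + (j : ℕ)] x₀)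
           else Φ i (fun j => T^[ℓ i + (j : ℕ)] x₁)) ∂μ ∂μ|
      ≤ C₀ * ((ℓ k : ℝ) - (u (k-1) : ℝ)) ^ (-γ)
        * (Fsup + FLip * ∑ i ∈ Finset.range (k+1), ∑ j, Φh i j) := by
  classical
  set sf : ℕ → ℕ := fun i => u i - ℓ i + 1 with hsf
  have hsf_pos : ∀ i, 0 < sf i := fun i => Nat.succ_pos _
  set q := MyBlocks.c sf (k+1) with hq
  set p := MyBlocks.c sf k with hp
  have hcsucc : MyBlocks.c sf (k+1) = MyBlocks.c sf k + sf k := MyBlocks.c_succ sf k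
  have hpq : p < q := by rw [hq, hp, hcsucc]; have := hsf_pos k; omega
  have hq_pos : 0 < q := by omega
  have huℓ : ∀ jj, jj ≤ k → ∀ i, i < jj → u i < ℓ jj := by
    intro jj
    induction jj with
    | zero => intro _ i hi; omega
    | succ jj ih =>
        intro hjj i hi
        rcases Nat.lt_or_ge i jj with h | h
        · have h1 := ih (by omega) i h
          have h2 := hℓu jj (by omega)
          have h3 := hu jj (by omega)
          omega
        · have hij : i = jj := by omega
          subst hij
          exact hu i (by omega)
  -- the time sequence
  set nb : ℕ → ℕ := fun m => ℓ (MyBlocks.blk sf k (min m (q-1)))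
      + (min m (q-1) - MyBlocks.c sf (MyBlocks.blk sf k (min m (q-1)))) with hnb
  have hnb_eq : ∀ m, m < q →
      nb m = ℓ (MyBlocks.blk sf k m) + (m - MyBlocks.c sf (MyBlocks.blk sf k m)) := by
    intro m hm
    have hmin : min m (q-1) = m := by omega
    rw [hnb]
    simp only [hmin]
  have hnpack : ∀ i, i ≤ k → ∀ j, j < sf i →
      nb (MyBlocks.c sf i + j) = ℓ i + j := by
    intro i hi j hj
    have hlt := MyBlocks.pack_lt sf k hi hj
    rw [hnb_eq _ (by rw [hq]; exact hlt)]
    rw [MyBlocks.blk_pack sf k hi hj]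
    congr 1
    omega
  have hcore : ∀ a b, a ≤ b → b < q →
      ℓ (MyBlocks.blk sf k a) + (a - MyBlocks.c sf (MyBlocks.blk sf k a))
        ≤ ℓ (MyBlocks.blk sf k b) + (b - MyBlocks.c sf (MyBlocks.blk sf k b)) := by
    intro a b hab hb
    have hha : a < q := lt_of_le_of_lt hab hb
    have hia := MyBlocks.blk_spec sf k a
    have hib := MyBlocks.blk_spec sf k b
    have hiale := MyBlocks.blk_le sf k a
    have hible := MyBlocks.blk_le sf k b
    have hii : MyBlocks.blk sf k a ≤ MyBlocks.blk sf k b :=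
      Nat.le_findGreatest hiale (le_trans hia hab)
    rcases eq_or_lt_of_le hii with h | h
    · rw [← h]; omega
    · have h1 := MyBlocks.blk_lt sf k (show a < MyBlocks.c sf (k+1) from hq ▸ hha)
      rw [MyBlocks.c_succ] at h1
      have h3 := hℓu (MyBlocks.blk sf k a) (by omega)
      have h4 : sf (MyBlocks.blk sf k a) = u (MyBlocks.blk sf k a) - ℓ (MyBlocks.blk sf k a) + 1 := rfl
      have h5 := huℓ (MyBlocks.blk sf k b) hible (MyBlocks.blk sf k a) h
      omega
  have hnmono : Monotone nb := by
    intro a b hab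
    have h1 : min a (q-1) ≤ min b (q-1) := by omega
    have h2 : min b (q-1) < q := by omega
    rw [hnb]
    exact hcore _ _ h1 h2
  -- Hölder data
  set Φh' : ℕ → ℕ → ℝ := fun i j => if h : j < u i - ℓ i + 1 then Φh i ⟨j, h⟩ else 0 with hΦh'
  have hΦh'0 : ∀ i j, 0 ≤ Φh' i j := by
    intro i j
    rw [hΦh']
    dsimp only
    split
    · exact hΦh0 i _
    · exact le_refl 0
  set gh : ℕ → ℝ := fun m => FLip * Φh' (MyBlocks.blk sf k m)
      (m - MyBlocks.c sf (MyBlocks.blk sf k m)) with hgh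
  have hgh0 : ∀ m, 0 ≤ gh m := fun m => mul_nonneg hFLip (hΦh'0 _ _)
  have hFcont : Continuous F := my_lipschitz_continuous hFLip hFl
  -- the observable G
  set G : (Fin q → M) → ℝ := fun z => F (fun i : Fin (k+1) =>
      Φ i (fun j : Fin (sf (i : ℕ)) =>
        z ⟨MyBlocks.c sf i + j, MyBlocks.pack_lt sf k (Nat.lt_succ_iff.mp i.isLt) j.isLt⟩)) with hG
  have hGmeas : Measurable G :=
    hFcont.measurable.comp (measurable_pi_lambda _ fun i =>
      (hΦ (i : ℕ)).comp (measurable_pi_lambda _ fun j => measurable_pi_apply _))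
  have hGb : ∀ z, |G z| ≤ Fsup := fun z => hFb _
  -- Hölder property of G
  have hGhol : ∀ (m : Fin q) (z : Fin q → M) (y : M),
      |G z - G (Function.update z m y)| ≤ gh (m : ℕ) * dist (z m) y ^ η := by
    intro m z y
    have hi₀ : MyBlocks.blk sf k (m : ℕ) ≤ k := MyBlocks.blk_le sf k (m : ℕ)
    have hcm : MyBlocks.c sf (MyBlocks.blk sf k (m : ℕ)) ≤ (m : ℕ) :=
      MyBlocks.blk_spec sf k (m : ℕ)
    have hmq : (m : ℕ) < MyBlocks.c sf (k+1) := hq ▸ m.isLt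
    have hcm2 := MyBlocks.blk_lt sf k hmq
    rw [MyBlocks.c_succ] at hcm2
    set i₀ := MyBlocks.blk sf k (m : ℕ) with hi₀def
    set j₀ := (m : ℕ) - MyBlocks.c sf i₀ with hj₀def
    have hj₀ : j₀ < sf i₀ := by omega
    have hm_eq : (m : ℕ) = MyBlocks.c sf i₀ + j₀ := by omega
    set w : (i : Fin (k+1)) → Fin (sf (i : ℕ)) → M := fun i j =>
      z ⟨MyBlocks.c sf i + j, MyBlocks.pack_lt sf k (Nat.lt_succ_iff.mp i.isLt) j.isLt⟩ with hw
    set w' : (i : Fin (k+1)) → Fin (sf (i : ℕ)) → M := fun i j =>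
      Function.update z m y
        ⟨MyBlocks.c sf i + j, MyBlocks.pack_lt sf k (Nat.lt_succ_iff.mp i.isLt) j.isLt⟩ with hw'
    set I₀ : Fin (k+1) := ⟨i₀, by omega⟩ with hI₀
    have hzero : ∀ i : Fin (k+1), (i : ℕ) ≠ i₀ → w' i = w i := by
      intro i hi
      funext j
      rw [hw', hw]
      dsimp only
      apply Function.update_of_ne
      intro hEq
      apply hi
      have hval : MyBlocks.c sf (i : ℕ) + (j : ℕ) = (m : ℕ) := congrArg Fin.val hEq
      have hb1 : MyBlocks.blk sf k (MyBlocks.c sf (i : ℕ) + (j : ℕ)) = (i : ℕ) :=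
        MyBlocks.blk_pack sf k (Nat.lt_succ_iff.mp i.isLt) j.isLt
      rw [hval] at hb1
      rw [← hb1, hi₀def]
    have hupd : w' I₀ = Function.update (w I₀) (⟨j₀, hj₀⟩ : Fin (sf i₀)) y := by
      funext j
      by_cases hj : j = (⟨j₀, hj₀⟩ : Fin (sf i₀))
      · subst hj
        rw [hw', hw]
        dsimp only
        have hidx : (⟨MyBlocks.c sf i₀ + j₀, MyBlocks.pack_lt sf k (Nat.lt_succ_iff.mp I₀.isLt) hj₀⟩ : Fin q) = m := by
          apply Fin.ext
          exact hm_eq.symm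
        rw [hidx]
        rw [Function.update_self, Function.update_self]
      · rw [Function.update_of_ne hj, hw', hw]
        dsimp only
        apply Function.update_of_ne
        intro hEq
        apply hj
        have hval : MyBlocks.c sf i₀ + (j : ℕ) = (m : ℕ) := congrArg Fin.val hEq
        apply Fin.ext
        simp only []
        omega
    have hstep1 : |G z - G (Function.update z m y)|
        ≤ FLip * ∑ i : Fin (k+1), |Φ (i : ℕ) (w i) - Φ (i : ℕ) (w' i)| := hFl _ _
    have hsum : ∑ i : Fin (k+1), |Φ (i : ℕ) (w i) - Φ (i : ℕ) (w' i)|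
        = |Φ i₀ (w I₀) - Φ i₀ (w' I₀)| := by
      rw [Finset.sum_eq_single I₀]
      · intro b _ hb
        have hbne : (b : ℕ) ≠ i₀ := by
          intro hEq
          apply hb
          apply Fin.ext
          exact hEq
        rw [hzero b hbne, sub_self, abs_zero]
      · intro hmem
        exact absurd (Finset.mem_univ I₀) hmem
    have hfin : |Φ i₀ (w I₀) - Φ i₀ (w' I₀)| ≤ Φh' i₀ j₀ * dist (z m) y ^ η := by
      rw [hupd]
      have h1 := hΦhol i₀ (⟨j₀, hj₀⟩ : Fin (sf i₀)) (w I₀) y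
      have h2 : w I₀ (⟨j₀, hj₀⟩ : Fin (sf i₀)) = z m := by
        rw [hw]
        dsimp only
        congr 1
        apply Fin.ext
        exact hm_eq.symm
      rw [h2] at h1
      refine h1.trans (le_of_eq ?_)
      congr 1
      rw [hΦh']
      dsimp only
      rw [dif_pos hj₀]
    calc |G z - G (Function.update z m y)|
        ≤ FLip * ∑ i : Fin (k+1), |Φ (i : ℕ) (w i) - Φ (i : ℕ) (w' i)| := hstep1
      _ = FLip * |Φ i₀ (w I₀) - Φ i₀ (w' I₀)| := by rw [hsum]
      _ ≤ FLip * (Φh' i₀ j₀ * dist (z m) y ^ η) := mul_le_mul_of_nonneg_left hfin hFLip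
      _ = gh (m : ℕ) * dist (z m) y ^ η := by rw [hgh]; ring
  -- the sum of the Hölder constants
  have hGhsum : ∑ m : Fin q, gh (m : ℕ)
      = FLip * ∑ i ∈ Finset.range (k+1), ∑ j, Φh i j := by
    rw [Fin.sum_univ_eq_sum_range gh q, hq, MyBlocks.sum_blocks, Finset.mul_sum]
    refine Finset.sum_congr rfl fun i hi => ?_
    have hik : i ≤ k := by
      have := Finset.mem_range.1 hi
      omega
    have hterm : ∀ j ∈ Finset.range (sf i), gh (MyBlocks.c sf i + j) = FLip * Φh' i j := by
      intro j hj
      have hjlt : j < sf i := Finset.mem_range.1 hj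
      rw [hgh]
      dsimp only
      rw [MyBlocks.blk_pack sf k hik hjlt, Nat.add_sub_cancel_left]
    rw [Finset.sum_congr rfl hterm, ← Finset.mul_sum]
    congr 1
    rw [← Fin.sum_univ_eq_sum_range (fun j => Φh' i j) (sf i)]
    refine Finset.sum_congr rfl fun j _ => ?_
    rw [hΦh']
    dsimp only
    rw [dif_pos j.isLt]
  -- endpoints of the gap
  have hnp : nb p = ℓ k := by
    have h0 := hnpack k le_rfl 0 (hsf_pos k)
    simpa using h0
  have hnp1 : nb (p-1) = u (k-1) := by
    have hc : MyBlocks.c sf k = MyBlocks.c sf (k-1) + sf (k-1) := by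
      conv_lhs => rw [show k = (k-1)+1 by omega]
      exact MyBlocks.c_succ sf (k-1)
    have h0 := hnpack (k-1) (by omega) (sf (k-1) - 1) (by have := hsf_pos (k-1); omega)
    have hidx : MyBlocks.c sf (k-1) + (sf (k-1) - 1) = p - 1 := by
      have := hsf_pos (k-1)
      omega
    rw [hidx] at h0
    rw [h0]
    have h5 := hℓu (k-1) (by omega)
    have h6 : sf (k-1) = u (k-1) - ℓ (k-1) + 1 := rfl
    omega
  have hlt : nb (p-1) < nb p := by
    rw [hnp, hnp1]
    exact huℓ k le_rfl (k-1) (by omega)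
  have hfcb := hFCB q p hpq nb hnmono hlt G hGmeas Fsup hFsup hGb
    (fun m : Fin q => gh (m : ℕ)) (fun m => hgh0 (m : ℕ)) hGhol
  rw [hnp, hnp1] at hfcb
  have hA : (fun x => G (fun i : Fin q => T^[nb (i : ℕ)] x))
      = fun x => F (fun i : Fin (k+1) => Φ i (fun j => T^[ℓ i + (j : ℕ)] x)) := by
    funext x
    rw [hG]
    dsimp only
    congr 1
    funext i
    congr 1
    funext j
    rw [hnpack (i : ℕ) (Nat.lt_succ_iff.mp i.isLt) (j : ℕ) j.isLt]
  have hD : ∀ x₀ x₁ : M, G (fun i : Fin q => if (i : ℕ) < p then T^[nb (i : ℕ)] x₀ else T^[nb (i : ℕ)] x₁)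
      = F (fun i : Fin (k+1) => if (i : ℕ) < k
          then Φ i (fun j => T^[ℓ i + (j : ℕ)] x₀)
          else Φ i (fun j => T^[ℓ i + (j : ℕ)] x₁)) := by
    intro x₀ x₁
    rw [hG]
    dsimp only
    congr 1
    funext i
    by_cases hik : (i : ℕ) < k
    · rw [if_pos hik]
      congr 1
      funext j
      have hlt2 : MyBlocks.c sf (i : ℕ) + (j : ℕ) < p := by
        have h1 : MyBlocks.c sf (i : ℕ) + (j : ℕ) < MyBlocks.c sf ((i : ℕ) + 1) := by
          rw [MyBlocks.c_succ]
          have := j.isLt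
          omega
        have h2 : MyBlocks.c sf ((i : ℕ)+1) ≤ MyBlocks.c sf k := MyBlocks.c_mono sf (by omega)
        rw [hp]
        omega
      rw [if_pos hlt2, hnpack (i : ℕ) (Nat.lt_succ_iff.mp i.isLt) (j : ℕ) j.isLt]
    · rw [if_neg hik]
      congr 1
      funext j
      have hik2 : (i : ℕ) = k := by
        have := i.isLt
        omega
      have hge : ¬ (MyBlocks.c sf (i : ℕ) + (j : ℕ) < p) := by
        have hcc : MyBlocks.c sf k ≤ MyBlocks.c sf (i : ℕ) :=
          le_of_eq (congrArg (MyBlocks.c sf) hik2.symm)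
        omega
      rw [if_neg hge, hnpack (i : ℕ) (Nat.lt_succ_iff.mp i.isLt) (j : ℕ) j.isLt]
  rw [hA] at hfcb
  have e2 : (fun x₀ => ∫ x₁, G (fun i : Fin q => if (i : ℕ) < p then T^[nb (i : ℕ)] x₀ else T^[nb (i : ℕ)] x₁) ∂μ)
      = (fun x₀ => ∫ x₁, F (fun i : Fin (k+1) => if (i : ℕ) < k
          then Φ i (fun j => T^[ℓ i + (j : ℕ)] x₀)
          else Φ i (fun j => T^[ℓ i + (j : ℕ)] x₁)) ∂μ) := by
    funext x₀
    exact integral_congr_ae (Filter.Eventually.of_forall fun x₁ => hD x₀ x₁)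
  rw [e2] at hfcb
  rw [hGhsum] at hfcb
  exact hfcb


/-- Step S2: replacing the decoupled last block by the independent copy. -/
lemma indep_last_step (μ : Measure M) [IsProbabilityMeasure μ]
    {Ω : Type} [mΩ : MeasurableSpace Ω] (P : Measure Ω) [IsProbabilityMeasure P]
    (k : ℕ) (Y : ℕ → Ω → ℝ) (hYmeas : ∀ i, Measurable (Y i))
    (hYindep : iIndepFun (fun i : Fin (k+1) => Y i) P)
    (Xk : M → ℝ) (hXk : Measurable Xk)
    (hIdk : IdentDistrib (Y k) Xk P μ)
    (F : (Fin (k+1) → ℝ) → ℝ) (hFcont : Continuous F) (Fsup : ℝ)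
    (hFb : ∀ y, |F y| ≤ Fsup) :
    ∫ ω, (∫ x₁, F (appFn k (fun i : Fin k => Y i ω) (Xk x₁)) ∂μ) ∂P
      = ∫ ω, F (fun i : Fin (k+1) => Y i ω) ∂P := by
  classical
  set g : (Fin k → ℝ) → ℝ → ℝ := fun a b => F (appFn k a b) with hg_def
  have hg : Measurable fun p : (Fin k → ℝ) × ℝ => g p.1 p.2 :=
    hFcont.measurable.comp (appFn_measurable k)
  set V : Ω → Fin k → ℝ := fun ω i => Y i ω with hV_def
  have hV : Measurable V := measurable_pi_lambda _ fun i => hYmeas i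
  set W : Ω → ℝ := Y k with hW_def
  have hW : Measurable W := hYmeas k
  -- independence of V and W
  have hVW : IndepFun V W P := by
    have hdisj : Disjoint (Finset.univ.image (Fin.castSucc : Fin k → Fin (k+1)))
        {Fin.last k} := by
      simp only [Finset.disjoint_singleton_right, Finset.mem_image]
      rintro ⟨j, -, hj⟩
      exact (Fin.castSucc_lt_last j).ne hj
    have h0 := hYindep.indepFun_finset _ _ hdisj (fun i => hYmeas i)
    set S : Finset (Fin (k+1)) := Finset.univ.image Fin.castSucc with hS_def
    set φ : ((i : S) → ℝ) → Fin k → ℝ :=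
      fun v i => v ⟨Fin.castSucc i, Finset.mem_image_of_mem _ (Finset.mem_univ i)⟩ with hφ_def
    have hφ : Measurable φ := measurable_pi_lambda _ fun i => measurable_pi_apply _
    set ψ : ((i : ({Fin.last k} : Finset (Fin (k+1)))) → ℝ) → ℝ :=
      fun v => v ⟨Fin.last k, Finset.mem_singleton_self _⟩ with hψ_def
    have hψ : Measurable ψ := measurable_pi_apply _
    have h1 := h0.comp hφ hψ
    have hVeq : V = φ ∘ (fun ω (i : S) => Y (i : Fin (k+1)) ω) := by
      funext ω i
      simp [hφ_def, hV_def]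
    have hWeq : W = ψ ∘ (fun ω (i : ({Fin.last k} : Finset (Fin (k+1)))) =>
        Y (i : Fin (k+1)) ω) := by
      funext ω
      simp [hψ_def, hW_def, Fin.val_last]
    rw [hVeq, hWeq]
    exact h1
  have hfub := my_indep_fubini hV hW hVW g hg Fsup (fun a b => hFb _)
  have hR : ∀ ω, F (fun i : Fin (k+1) => Y i ω) = g (V ω) (W ω) := by
    intro ω
    rw [hg_def]
    congr 1
    funext i
    by_cases h : (i : ℕ) < k
    · simp only [appFn, h, dif_pos, hV_def]
    · simp only [appFn, h, dif_neg, not_false_iff, hW_def]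
      have : (i : ℕ) = k := by omega
      rw [this]
  have hinner : ∀ ω, ∫ x₁, g (V ω) (Xk x₁) ∂μ = ∫ ω', g (V ω) (W ω') ∂P := by
    intro ω
    have hga : Measurable (g (V ω)) :=
      (hg.comp (measurable_const.prodMk measurable_id))
    exact ((hIdk.comp hga).integral_eq).symm
  calc ∫ ω, (∫ x₁, F (appFn k (fun i : Fin k => Y i ω) (Xk x₁)) ∂μ) ∂P
      = ∫ ω, ∫ ω', g (V ω) (W ω') ∂P ∂P := by
        refine integral_congr_ae (Filter.Eventually.of_forall fun ω => ?_)
        exact hinner ω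
    _ = ∫ ω, g (V ω) (W ω) ∂P := hfub.symm
    _ = ∫ ω, F (fun i : Fin (k+1) => Y i ω) ∂P := by
        refine integral_congr_ae (Filter.Eventually.of_forall fun ω => ?_)
        exact (hR ω).symm


lemma key_lemma (μ : Measure M) [IsProbabilityMeasure μ] (T : M → M)
    (hT : MeasurePreserving T μ μ) (η γ : ℝ) (C₀ : ℝ) (hC₀ : 0 ≤ C₀)
    (hFCB : ∀ (q p : ℕ), p < q → ∀ n : ℕ → ℕ, Monotone n → n (p - 1) < n p →
      ∀ G : (Fin q → M) → ℝ, Measurable G →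
      ∀ Ginf : ℝ, 0 ≤ Ginf → (∀ x, |G x| ≤ Ginf) →
      ∀ Gh : Fin q → ℝ, (∀ i, 0 ≤ Gh i) →
      (∀ (i : Fin q) (x : Fin q → M) (y : M),
        |G x - G (Function.update x i y)| ≤ Gh i * dist (x i) y ^ η) →
      |(∫ x, G (fun i => T^[n i] x) ∂μ) -
        ∫ x₀, ∫ x₁, G (fun i => if (i : ℕ) < p then T^[n i] x₀ else T^[n i] x₁) ∂μ ∂μ|
        ≤ C₀ * ((n p : ℝ) - (n (p - 1) : ℝ)) ^ (-γ) * (Ginf + ∑ i, Gh i)) :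
    ∀ (k : ℕ), 1 ≤ k →
    ∀ (ℓ u : ℕ → ℕ), (∀ i, i < k → ℓ i ≤ u i) → (∀ i, i + 1 < k → u i < ℓ (i + 1)) →
    ∀ (Φ : (i : ℕ) → (Fin (u i - ℓ i + 1) → M) → ℝ), (∀ i, Measurable (Φ i)) →
    ∀ (Φh : (i : ℕ) → Fin (u i - ℓ i + 1) → ℝ), (∀ i j, 0 ≤ Φh i j) →
      (∀ (i : ℕ) (j : Fin (u i - ℓ i + 1)) (z : Fin (u i - ℓ i + 1) → M) (y : M),
        |Φ i z - Φ i (Function.update z j y)| ≤ Φh i j * dist (z j) y ^ η) →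
    ∀ (Ω : Type) (mΩ : MeasurableSpace Ω) (P : Measure Ω), IsProbabilityMeasure P →
    ∀ (Xhat : ℕ → Ω → ℝ),
      iIndepFun (fun i : Fin k => Xhat i) P →
      (∀ i, i < k → IdentDistrib (Xhat i) (fun x => Φ i (fun j => T^[ℓ i + (j : ℕ)] x)) P μ) →
    ∀ (F : (Fin k → ℝ) → ℝ) (Fsup FLip : ℝ), 0 ≤ Fsup → 0 ≤ FLip →
      (∀ y, |F y| ≤ Fsup) →
      (∀ y y', |F y - F y'| ≤ FLip * ∑ i, |y i - y' i|) →
      |(∫ x, F (fun i => Φ i (fun j => T^[ℓ i + (j : ℕ)] x)) ∂μ) -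
          ∫ ω, F (fun i => Xhat i ω) ∂P|
        ≤ C₀ * (∑ r ∈ Finset.range (k - 1), ((ℓ (r + 1) : ℝ) - (u r : ℝ)) ^ (-γ))
          * (Fsup + FLip * ∑ i ∈ Finset.range k, ∑ j, Φh i j) := by
  intro k hk
  induction k, hk using Nat.le_induction with
  | base =>
    intro ℓ u hℓu hu Φ hΦ Φh hΦh0 hΦhol Ω mΩ P hP Xhat hIndep hId F Fsup FLip hFsup hFLip hFb hFl
    haveI := hP
    have hFcont : Continuous F := my_lipschitz_continuous hFLip hFl
    set g : ℝ → ℝ := fun t => F (fun _ => t) with hgdef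
    have hgm : Measurable g :=
      hFcont.measurable.comp (measurable_pi_lambda _ fun _ => measurable_id)
    have h0 : ∫ ω, g (Xhat 0 ω) ∂P = ∫ x, g (Φ 0 (fun j => T^[ℓ 0 + (j : ℕ)] x)) ∂μ :=
      ((hId 0 Nat.one_pos).comp hgm).integral_eq
    have e1 : (fun ω => F (fun i : Fin 1 => Xhat (i : ℕ) ω)) = fun ω => g (Xhat 0 ω) := by
      funext ω
      rw [hgdef]
      congr 1
      funext i
      have h : (i : ℕ) = 0 := by omega
      rw [h]
    have e2 : (fun x => F (fun i : Fin 1 => Φ (i : ℕ) (fun j => T^[ℓ (i : ℕ) + (j : ℕ)] x)))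
        = fun x => g (Φ 0 (fun j => T^[ℓ 0 + (j : ℕ)] x)) := by
      funext x
      rw [hgdef]
      congr 1
      funext i
      have h : (i : ℕ) = 0 := by omega
      exact congrArg (fun t : ℕ => Φ t (fun j => T^[ℓ t + (j : ℕ)] x)) h
    rw [e2, e1, h0, sub_self, abs_zero]
    simp
  | succ k hk ih =>
    intro ℓ u hℓu hu Φ hΦ Φh hΦh0 hΦhol Ω mΩ P hP Xhat hIndep hId F Fsup FLip hFsup hFLip hFb hFl
    haveI := hP
    have hFcont : Continuous F := my_lipschitz_continuous hFLip hFl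
    have hTm := hT.measurable
    have hXm : ∀ i : ℕ, Measurable (fun x => Φ i (fun j => T^[ℓ i + (j : ℕ)] x)) := fun i =>
      (hΦ i).comp (measurable_pi_lambda _ fun j => hTm.iterate _)
    -- measurable modifications of Xhat
    set Y : ℕ → Ω → ℝ := fun i => if h : i < k+1 then
        AEMeasurable.mk (Xhat i) (hId i h).aemeasurable_fst else fun _ => 0 with hY
    have hYmeas : ∀ i, Measurable (Y i) := by
      intro i
      rw [hY]
      dsimp only
      split
      · exact AEMeasurable.measurable_mk _
      · exact measurable_const
    have hYae : ∀ i, i < k+1 → Xhat i =ᵐ[P] Y i := by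
      intro i h
      rw [hY]
      dsimp only
      rw [dif_pos h]
      exact AEMeasurable.ae_eq_mk _
    have hIdY : ∀ i, i < k+1 →
        IdentDistrib (Y i) (fun x => Φ i (fun j => T^[ℓ i + (j : ℕ)] x)) P μ := fun i h =>
      ((IdentDistrib.of_ae_eq (hId i h).aemeasurable_fst (hYae i h)).symm).trans (hId i h)
    have hYindep : iIndepFun
        (fun i : Fin (k+1) => Y i) P :=
      my_iIndep_ae_eq hIndep (fun i => hYae i i.isLt)
    have hYindep_k : iIndepFun (fun i : Fin k => Y i) P :=
      my_iIndep_precomp hYindep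
    have hBB' : ∫ ω, F (fun i : Fin (k+1) => Xhat i ω) ∂P
        = ∫ ω, F (fun i : Fin (k+1) => Y i ω) ∂P := by
      refine integral_congr_ae ?_
      have hall := ae_all_iff.2 (fun i : Fin (k+1) => hYae i i.isLt)
      filter_upwards [hall] with ω hω
      congr 1
      funext i
      exact hω i
    -- the conditioned function F'
    set F' : (Fin k → ℝ) → ℝ := fun y =>
      ∫ x₁, F (appFn k y (Φ k (fun j => T^[ℓ k + (j : ℕ)] x₁))) ∂μ with hF'
    have hintb : ∀ y : Fin k → ℝ,
        Integrable (fun x₁ => F (appFn k y (Φ k (fun j => T^[ℓ k + (j : ℕ)] x₁)))) μ := by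
      intro y
      refine Integrable.mono' (integrable_const Fsup) ?_
        (Filter.Eventually.of_forall fun x => ?_)
      · exact (hFcont.measurable.comp ((appFn_measurable k).comp
          (measurable_const.prodMk (hXm k)))).aestronglyMeasurable
      · simpa [Real.norm_eq_abs] using hFb _
    have hF'b : ∀ y, |F' y| ≤ Fsup := by
      intro y
      rw [hF']
      dsimp only
      rw [← Real.norm_eq_abs]
      have hb := norm_integral_le_of_norm_le_const (μ := μ)
        (f := fun x₁ => F (appFn k y (Φ k (fun j => T^[ℓ k + (j : ℕ)] x₁)))) (C := Fsup)
        (Filter.Eventually.of_forall fun x => by simpa [Real.norm_eq_abs] using hFb _)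
      simpa [measure_univ] using hb
    have hF'l : ∀ y y', |F' y - F' y'| ≤ FLip * ∑ i, |y i - y' i| := by
      intro y y'
      rw [hF']
      dsimp only
      rw [← integral_sub (hintb y) (hintb y'), ← Real.norm_eq_abs]
      have hb : ∀ x₁ : M, ‖F (appFn k y (Φ k (fun j => T^[ℓ k + (j : ℕ)] x₁)))
          - F (appFn k y' (Φ k (fun j => T^[ℓ k + (j : ℕ)] x₁)))‖
          ≤ FLip * ∑ i, |y i - y' i| := by
        intro x₁
        rw [Real.norm_eq_abs]
        refine (hFl _ _).trans ?_
        refine mul_le_mul_of_nonneg_left (le_of_eq ?_) hFLip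
        rw [Fin.sum_univ_castSucc]
        simp only [appFn_castSucc, appFn_last, sub_self, abs_zero, add_zero]
      have hb2 := norm_integral_le_of_norm_le_const (μ := μ)
        (C := FLip * ∑ i, |y i - y' i|) (Filter.Eventually.of_forall hb)
      simpa [measure_univ] using hb2
    -- FCB step
    have hfcb := fcb_step μ T hTm η γ C₀ hFCB k hk ℓ u hℓu hu Φ hΦ Φh hΦh0 hΦhol
      F Fsup FLip hFsup hFLip hFb hFl
    -- identify the decoupled double integral with ∫ F'
    have hD : (fun x₀ => ∫ x₁, F (fun i : Fin (k+1) => if (i : ℕ) < k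
          then Φ i (fun j => T^[ℓ i + (j : ℕ)] x₀)
          else Φ i (fun j => T^[ℓ i + (j : ℕ)] x₁)) ∂μ)
        = fun x₀ => F' (fun i : Fin k => Φ (i : ℕ) (fun j => T^[ℓ (i : ℕ) + (j : ℕ)] x₀)) := by
      funext x₀
      rw [hF']
      dsimp only
      refine integral_congr_ae (Filter.Eventually.of_forall fun x₁ => ?_)
      beta_reduce
      congr 1
      funext i
      by_cases h : (i : ℕ) < k
      · rw [if_pos h]
        simp only [appFn, h, dif_pos]
      · rw [if_neg h]
        simp only [appFn, h, dif_neg, not_false_iff]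
        have hik : (i : ℕ) = k := by
          have := i.isLt
          omega
        exact congrArg (fun t : ℕ => Φ t (fun j => T^[ℓ t + (j : ℕ)] x₁)) hik
    rw [hD] at hfcb
    -- induction hypothesis
    have hIH := ih ℓ u (fun i h => hℓu i (by omega)) (fun i h => hu i (by omega)) Φ hΦ
      Φh hΦh0 hΦhol Ω mΩ P hP Y hYindep_k (fun i h => hIdY i (by omega))
      F' Fsup FLip hFsup hFLip hF'b hF'l
    -- last-block decoupling equals the independent copy
    have hEB : ∫ ω, F' (fun i : Fin k => Y (i : ℕ) ω) ∂P
        = ∫ ω, F (fun i : Fin (k+1) => Y (i : ℕ) ω) ∂P := by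
      have hstep := indep_last_step μ P k Y hYmeas hYindep
        (fun x => Φ k (fun j => T^[ℓ k + (j : ℕ)] x)) (hXm k)
        (hIdY k (by omega)) F hFcont Fsup hFb
      rw [← hstep]
    rw [hEB] at hIH
    -- nonnegativity facts
    have hSnn : (0:ℝ) ≤ ∑ i ∈ Finset.range (k+1), ∑ j, Φh i j :=
      Finset.sum_nonneg fun i _ => Finset.sum_nonneg fun j _ => hΦh0 i j
    have hZknn : FLip * ∑ i ∈ Finset.range k, ∑ j, Φh i j
        ≤ FLip * ∑ i ∈ Finset.range (k+1), ∑ j, Φh i j := by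
      refine mul_le_mul_of_nonneg_left ?_ hFLip
      rw [Finset.sum_range_succ]
      have : (0:ℝ) ≤ ∑ j, Φh k j := Finset.sum_nonneg fun j _ => hΦh0 k j
      linarith
    have hsumnn : (0:ℝ) ≤ ∑ r ∈ Finset.range (k-1), ((ℓ (r+1) : ℝ) - (u r : ℝ)) ^ (-γ) := by
      refine Finset.sum_nonneg fun r hr => ?_
      have hr' := Finset.mem_range.1 hr
      have := hu r (by omega)
      refine Real.rpow_nonneg ?_ _
      have h2 : (u r : ℝ) ≤ (ℓ (r+1) : ℝ) := by exact_mod_cast this.le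
      linarith
    have hIH2 : |(∫ x, F' (fun i : Fin k => Φ (i : ℕ) (fun j => T^[ℓ (i : ℕ) + (j : ℕ)] x)) ∂μ)
        - ∫ ω, F (fun i : Fin (k+1) => Y (i : ℕ) ω) ∂P|
        ≤ C₀ * (∑ r ∈ Finset.range (k-1), ((ℓ (r+1) : ℝ) - (u r : ℝ)) ^ (-γ))
          * (Fsup + FLip * ∑ i ∈ Finset.range (k+1), ∑ j, Φh i j) := by
      refine hIH.trans ?_
      refine mul_le_mul_of_nonneg_left ?_ (mul_nonneg hC₀ hsumnn)
      linarith
    -- assemble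
    rw [hBB']
    have habs := abs_sub_le
      (∫ x, F (fun i : Fin (k+1) => Φ (i : ℕ) (fun j => T^[ℓ (i : ℕ) + (j : ℕ)] x)) ∂μ)
      (∫ x₀, F' (fun i : Fin k => Φ (i : ℕ) (fun j => T^[ℓ (i : ℕ) + (j : ℕ)] x₀)) ∂μ)
      (∫ ω, F (fun i : Fin (k+1) => Y (i : ℕ) ω) ∂P)
    refine habs.trans ?_
    have htotal := add_le_add hfcb hIH2
    refine htotal.trans (le_of_eq ?_)
    have hrange : ∑ r ∈ Finset.range (k+1-1), ((ℓ (r+1) : ℝ) - (u r : ℝ)) ^ (-γ)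
        = (∑ r ∈ Finset.range (k-1), ((ℓ (r+1) : ℝ) - (u r : ℝ)) ^ (-γ))
          + ((ℓ k : ℝ) - (u (k-1) : ℝ)) ^ (-γ) := by
      have hk1 : k + 1 - 1 = (k-1) + 1 := by omega
      rw [hk1, Finset.sum_range_succ, show k - 1 + 1 = k by omega]
    rw [hrange]
    ring


end Main


/-- **Lemma 4.1 (weak dependence).** Suppose `T` satisfies the Functional Correlation Bound
with rate `n^{-γ}`. Then there is `C > 0`, depending only on the FCB constant, such that for
disjoint blocks `{ℓ_i, …, u_i}` (`ℓ_i ≤ u_i < ℓ_{i+1}`), bounded separately `η`-Hölder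
`Φ_i : M^{u_i-ℓ_i+1} → ℝ` with `|Φ_i| ≤ R`, random variables `X_i(x) = Φ_i(T^{ℓ_i}x,…,T^{u_i}x)`
and independent `X̂_i` with `X̂_i =_d X_i`, and every `F : [-R,R]^k → ℝ` Lipschitz for the
`ℓ¹` norm (with sup bound `Fsup` and Lipschitz constant `FLip` on the cube):
`|E_μ[F(X_0,…,X_{k-1})] - E[F(X̂_0,…,X̂_{k-1})]|
  ≤ C ∑_{r=0}^{k-2} (ℓ_{r+1}-u_r)^{-γ} (Fsup + FLip ∑_i ∑_j [Φ_i]_{η,j})`. -/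
theorem stmt2 {M : Type*} [MetricSpace M] [MeasurableSpace M] [BorelSpace M]
    (μ : Measure M) [IsProbabilityMeasure μ] (T : M → M) (hT : MeasurePreserving T μ μ)
    (η : ℝ) (hη0 : 0 < η) (hη1 : η ≤ 1) (γ : ℝ) (hγ : 0 < γ)
    (hFCB : FunctionalCorrelationBound μ T η γ) :
    ∃ C : ℝ, 0 < C ∧
      ∀ (k : ℕ), 1 ≤ k →
      ∀ (ℓ u : ℕ → ℕ),
        (∀ i, i < k → ℓ i ≤ u i) →
        (∀ i, i + 1 < k → u i < ℓ (i + 1)) →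
      ∀ (Φ : (i : ℕ) → (Fin (u i - ℓ i + 1) → M) → ℝ),
        (∀ i, Measurable (Φ i)) →
      ∀ (R : ℝ), 0 ≤ R →
        (∀ (i : ℕ), i < k → ∀ z : Fin (u i - ℓ i + 1) → M, |Φ i z| ≤ R) →
      ∀ (Φh : (i : ℕ) → Fin (u i - ℓ i + 1) → ℝ),
        (∀ i j, 0 ≤ Φh i j) →
        (∀ (i : ℕ) (j : Fin (u i - ℓ i + 1)) (z : Fin (u i - ℓ i + 1) → M) (y : M),
          |Φ i z - Φ i (Function.update z j y)| ≤ Φh i j * dist (z j) y ^ η) →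
      ∀ (Ω : Type) (_ : MeasurableSpace Ω) (P : Measure Ω), IsProbabilityMeasure P →
      ∀ (Xhat : ℕ → Ω → ℝ),
        ProbabilityTheory.iIndepFun
          (fun i : Fin k => Xhat i) P →
        (∀ i, i < k → ProbabilityTheory.IdentDistrib (Xhat i)
          (fun x => Φ i (fun j => T^[ℓ i + (j : ℕ)] x)) P μ) →
      ∀ (F : (Fin k → ℝ) → ℝ) (Fsup FLip : ℝ), 0 ≤ Fsup → 0 ≤ FLip →
        (∀ y : Fin k → ℝ, (∀ i, |y i| ≤ R) → |F y| ≤ Fsup) →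
        (∀ y y' : Fin k → ℝ, (∀ i, |y i| ≤ R) → (∀ i, |y' i| ≤ R) →
          |F y - F y'| ≤ FLip * ∑ i, |y i - y' i|) →
        |(∫ x, F (fun i => Φ i (fun j => T^[ℓ i + (j : ℕ)] x)) ∂μ) -
            ∫ ω, F (fun i => Xhat i ω) ∂P|
          ≤ C * (∑ r ∈ Finset.range (k - 1), ((ℓ (r + 1) : ℝ) - (u r : ℝ)) ^ (-γ)) *
            (Fsup + FLip * ∑ i ∈ Finset.range k, ∑ j, Φh i j) := by
  obtain ⟨C₀, hC₀, hbody⟩ := hFCB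
  refine ⟨C₀, hC₀, ?_⟩
  intro k hk ℓ u hℓu hu Φ hΦ R hR hΦR Φh hΦh0 hΦhol Ω mΩ P hP Xhat hIndep hId
    F Fsup FLip hFsup hFLip hFb hFl
  haveI := hP
  set clamp : ℝ → ℝ := fun t => max (-R) (min R t) with hclamp
  have hclamp_abs : ∀ t, |clamp t| ≤ R := by
    intro t
    rw [abs_le, hclamp]
    constructor
    · exact le_max_left _ _
    · exact max_le (neg_le_self hR) (min_le_left _ _)
  have hclamp_eq : ∀ t, |t| ≤ R → clamp t = t := by
    intro t ht
    rw [abs_le] at ht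
    rw [hclamp]
    dsimp only
    rw [min_eq_right ht.2, max_eq_right ht.1]
  have hclamp_lip : ∀ a b, |clamp a - clamp b| ≤ |a - b| := by
    intro a b
    rw [hclamp]
    dsimp only
    rw [max_comm (-R) (min R a), max_comm (-R) (min R b)]
    refine (abs_max_sub_max_le_abs _ _ _).trans ?_
    have h1 := abs_min_sub_min_le_max R a R b
    simpa using h1
  set Ft : (Fin k → ℝ) → ℝ := fun y => F (fun i => clamp (y i)) with hFt
  have hFtb : ∀ y, |Ft y| ≤ Fsup := fun y => hFb _ (fun i => hclamp_abs _)
  have hFtl : ∀ y y', |Ft y - Ft y'| ≤ FLip * ∑ i, |y i - y' i| := by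
    intro y y'
    refine (hFl _ _ (fun i => hclamp_abs _) (fun i => hclamp_abs _)).trans ?_
    refine mul_le_mul_of_nonneg_left ?_ hFLip
    exact Finset.sum_le_sum fun i _ => hclamp_lip _ _
  have hkey := key_lemma μ T hT η γ C₀ hC₀.le hbody k hk ℓ u hℓu hu Φ hΦ Φh hΦh0 hΦhol
    Ω mΩ P hP Xhat hIndep hId Ft Fsup FLip hFsup hFLip hFtb hFtl
  have e1 : ∫ x, Ft (fun i : Fin k => Φ (i : ℕ) (fun j => T^[ℓ (i : ℕ) + (j : ℕ)] x)) ∂μ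
      = ∫ x, F (fun i : Fin k => Φ (i : ℕ) (fun j => T^[ℓ (i : ℕ) + (j : ℕ)] x)) ∂μ := by
    refine integral_congr_ae (Filter.Eventually.of_forall fun x => ?_)
    rw [hFt]
    dsimp only
    congr 1
    funext i
    exact hclamp_eq _ (hΦR (i : ℕ) i.isLt _)
  have e2 : ∫ ω, Ft (fun i : Fin k => Xhat (i : ℕ) ω) ∂P
      = ∫ ω, F (fun i : Fin k => Xhat (i : ℕ) ω) ∂P := by
    refine integral_congr_ae ?_
    have hae : ∀ i : Fin k, ∀ᵐ ω ∂P, |Xhat (i : ℕ) ω| ≤ R := by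
      intro i
      refine ((hId (i : ℕ) i.isLt).symm.ae_snd (p := fun t => |t| ≤ R) ?_ ?_)
      · exact measurableSet_le (measurable_norm) measurable_const
      · exact Filter.Eventually.of_forall fun x => hΦR (i : ℕ) i.isLt _
    have hall := ae_all_iff.2 hae
    filter_upwards [hall] with ω hω
    rw [hFt]
    dsimp only
    congr 1
    funext i
    exact hclamp_eq _ (hω i)
  rw [e1, e2] at hkey
  exact hkey
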